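/- If H_r† H_r ⪯ H_e† H_e (Loewner order), then for every positive semidefinite matrix K, det(I + H_r K H_r†) ≤ det(I + H_e K H_e†); consequently log det(I + H_r K H_r†) − log det(I + H_e K H_e†) ≤ 0 for all K ⪰ 0. -/

import Mathlib

open Matrix
open scoped ComplexOrder
open scoped MatrixOrder

section Aux

variable {n : ℕ}

/-- The PSD square root of a positive definite matrix is positive definite. -/
lemma aux_posDef_sqrt {M : Matrix (Fin n) (Fin n) ℂ} (hM : M.PosDef) :
    (CFC.sqrt M).PosDef := by
  exact (CFC.sqrt_nonneg M).posSemidef.posDef_iff_isUnit.mpr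
    ((CFC.isUnit_sqrt_iff M hM.posSemidef.nonneg).mpr hM.isUnit)

/-- `det (1 + C) ≥ 1` for positive semidefinite `C`. -/
lemma aux_one_le_det_one_add {C : Matrix (Fin n) (Fin n) ℂ} (hC : C.PosSemidef) :
    (1 : ℂ) ≤ (1 + C).det := by
  have hH : C.IsHermitian := hC.1
  set U : Matrix (Fin n) (Fin n) ℂ := (hH.eigenvectorUnitary : Matrix (Fin n) (Fin n) ℂ)
    with hU
  have hUU : U * star U = 1 := Matrix.mem_unitaryGroup_iff.mp hH.eigenvectorUnitary.2
  have hspec : C = U * diagonal (RCLike.ofReal ∘ hH.eigenvalues) * star U :=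
    hH.spectral_theorem
  have hkey : 1 + C = U * (1 + diagonal (RCLike.ofReal ∘ hH.eigenvalues)) * star U := by
    rw [Matrix.mul_add, Matrix.add_mul, Matrix.mul_one, hUU, ← hspec]
  have hdet : (1 + C).det
      = ((1 : Matrix (Fin n) (Fin n) ℂ) + diagonal (RCLike.ofReal ∘ hH.eigenvalues)).det := by
    rw [hkey, det_mul, det_mul, mul_comm U.det, mul_assoc, ← det_mul, hUU, det_one, mul_one]
  rw [hdet]
  have hdiag : (1 : Matrix (Fin n) (Fin n) ℂ) + diagonal (RCLike.ofReal ∘ hH.eigenvalues)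
      = diagonal (fun i => (1 : ℂ) + (hH.eigenvalues i : ℂ)) := by
    rw [← diagonal_one, diagonal_add]
    rfl
  rw [hdiag, det_diagonal]
  have : (∏ i, ((1 : ℂ) + (hH.eigenvalues i : ℂ)))
      = ((∏ i, ((1 : ℝ) + hH.eigenvalues i) : ℝ) : ℂ) := by
    push_cast
    rfl
  rw [this]
  have hprod : (1 : ℝ) ≤ ∏ i, ((1 : ℝ) + hH.eigenvalues i) := by
    have h := Finset.prod_le_prod (s := Finset.univ) (f := fun _ : Fin n => (1 : ℝ))
      (g := fun i => (1 : ℝ) + hH.eigenvalues i) (fun i _ => zero_le_one)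
      (fun i _ => le_add_of_nonneg_right (hC.eigenvalues_nonneg i))
    simpa using h
  calc (1 : ℂ) = ((1 : ℝ) : ℂ) := by norm_num
    _ ≤ ((∏ i, ((1 : ℝ) + hH.eigenvalues i) : ℝ) : ℂ) := by
        rw [Complex.real_le_real]; exact hprod

/-- Monotonicity of `det (1 + ·)` on PSD matrices w.r.t. the Loewner order. -/
lemma aux_det_le_det {P Q : Matrix (Fin n) (Fin n) ℂ} (hP : P.PosSemidef)
    (hQP : (Q - P).PosSemidef) : (1 + P).det ≤ (1 + Q).det := by
  have h1P : (1 + P).PosDef := Matrix.PosDef.one.add_posSemidef hP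
  set S : Matrix (Fin n) (Fin n) ℂ := CFC.sqrt (1 + P) with hSdef
  have hS : S.PosDef := aux_posDef_sqrt h1P
  have hSS : S * S = 1 + P := CFC.sqrt_mul_sqrt_self _ h1P.posSemidef.nonneg
  have hSH : Sᴴ = S := hS.isHermitian
  haveI : Invertible S := hS.isUnit.invertible
  have hSinvH : (S⁻¹)ᴴ = S⁻¹ := by rw [Matrix.conjTranspose_nonsing_inv, hSH]
  set C : Matrix (Fin n) (Fin n) ℂ := S⁻¹ * (Q - P) * S⁻¹ with hCdef
  have hC : C.PosSemidef := by
    have := hQP.mul_mul_conjTranspose_same S⁻¹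
    rwa [hSinvH] at this
  have hkey : 1 + Q = S * (1 + C) * S := by
    rw [Matrix.mul_add, Matrix.add_mul, Matrix.mul_one, hSS, hCdef]
    have : S * (S⁻¹ * (Q - P) * S⁻¹) * S = Q - P := by
      rw [← Matrix.mul_assoc, ← Matrix.mul_assoc, Matrix.mul_inv_of_invertible,
        Matrix.one_mul, Matrix.mul_assoc, Matrix.inv_mul_of_invertible, Matrix.mul_one]
    rw [this]
    abel
  have hdetQ : (1 + Q).det = (1 + P).det * (1 + C).det := by
    rw [hkey, det_mul, det_mul, mul_comm, ← mul_assoc, ← det_mul, hSS]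
  rw [hdetQ]
  calc (1 + P).det = (1 + P).det * 1 := (mul_one _).symm
    _ ≤ (1 + P).det * (1 + C).det :=
        mul_le_mul_of_nonneg_left (aux_one_le_det_one_add hC) h1P.det_pos.le

/-- Sylvester-style reduction: `det (1 + H K Hᴴ) = det (1 + √K (Hᴴ H) √K)`. -/
lemma aux_det_reduce {m : ℕ} (H : Matrix (Fin m) (Fin n) ℂ)
    {K : Matrix (Fin n) (Fin n) ℂ} (hK : K.PosSemidef) :
    ((1 : Matrix (Fin m) (Fin m) ℂ) + H * K * Hᴴ).det
      = ((1 : Matrix (Fin n) (Fin n) ℂ) + CFC.sqrt K * (Hᴴ * H) * CFC.sqrt K).det := by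
  have hTT : CFC.sqrt K * CFC.sqrt K = K := CFC.sqrt_mul_sqrt_self K hK.nonneg
  have main : ∀ T : Matrix (Fin n) (Fin n) ℂ,
      ((1 : Matrix (Fin m) (Fin m) ℂ) + H * (T * T) * Hᴴ).det
        = ((1 : Matrix (Fin n) (Fin n) ℂ) + T * (Hᴴ * H) * T).det := by
    intro T
    rw [show H * (T * T) * Hᴴ = H * (T * T * Hᴴ) by simp only [Matrix.mul_assoc]]
    rw [det_one_add_mul_comm]
    rw [show T * T * Hᴴ * H = T * (T * Hᴴ * H) by simp only [Matrix.mul_assoc]]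
    rw [det_one_add_mul_comm]
    rw [show T * Hᴴ * H * T = T * (Hᴴ * H) * T by simp only [Matrix.mul_assoc]]
  rw [← main (CFC.sqrt K), hTT]

end Aux

/-- If `H_rᴴ H_r ⪯ H_eᴴ H_e`, then for every `K ⪰ 0`,
`det(I + H_r K H_rᴴ) ≤ det(I + H_e K H_eᴴ)`; consequently
`log det(I + H_r K H_rᴴ) − log det(I + H_e K H_eᴴ) ≤ 0`. -/
theorem stmt_16 {nr ne nt : ℕ}
    (Hr : Matrix (Fin nr) (Fin nt) ℂ) (He : Matrix (Fin ne) (Fin nt) ℂ)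
    (h : (Heᴴ * He - Hrᴴ * Hr).PosSemidef) :
    ∀ K : Matrix (Fin nt) (Fin nt) ℂ, K.PosSemidef →
      ((1 : Matrix (Fin nr) (Fin nr) ℂ) + Hr * K * Hrᴴ).det.re
          ≤ ((1 : Matrix (Fin ne) (Fin ne) ℂ) + He * K * Heᴴ).det.re ∧
      Real.log (((1 : Matrix (Fin nr) (Fin nr) ℂ) + Hr * K * Hrᴴ).det.re)
          - Real.log (((1 : Matrix (Fin ne) (Fin ne) ℂ) + He * K * Heᴴ).det.re) ≤ 0 := by
  intro K hK
  set T : Matrix (Fin nt) (Fin nt) ℂ := CFC.sqrt K with hTdef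
  have hTH : Tᴴ = T := (CFC.sqrt_nonneg K).posSemidef.1
  set P : Matrix (Fin nt) (Fin nt) ℂ := T * (Hrᴴ * Hr) * T with hPdef
  set Q : Matrix (Fin nt) (Fin nt) ℂ := T * (Heᴴ * He) * T with hQdef
  have hP : P.PosSemidef := by
    have := (posSemidef_conjTranspose_mul_self Hr).mul_mul_conjTranspose_same T
    rwa [hTH] at this
  have hQP : (Q - P).PosSemidef := by
    have hQPeq : Q - P = T * (Heᴴ * He - Hrᴴ * Hr) * T := by
      rw [hQdef, hPdef, Matrix.mul_sub, Matrix.sub_mul]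
    have := h.mul_mul_conjTranspose_same T
    rw [hTH] at this
    rwa [hQPeq]
  have hdetr : ((1 : Matrix (Fin nr) (Fin nr) ℂ) + Hr * K * Hrᴴ).det = (1 + P).det :=
    aux_det_reduce Hr hK
  have hdete : ((1 : Matrix (Fin ne) (Fin ne) ℂ) + He * K * Heᴴ).det = (1 + Q).det :=
    aux_det_reduce He hK
  have hle : ((1 : Matrix (Fin nr) (Fin nr) ℂ) + Hr * K * Hrᴴ).det
      ≤ ((1 : Matrix (Fin ne) (Fin ne) ℂ) + He * K * Heᴴ).det := by
    rw [hdetr, hdete]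
    exact aux_det_le_det hP hQP
  have hlere := (Complex.le_def.mp hle).1
  refine ⟨hlere, ?_⟩
  have hrpos : (0 : ℂ) < ((1 : Matrix (Fin nr) (Fin nr) ℂ) + Hr * K * Hrᴴ).det :=
    (Matrix.PosDef.one.add_posSemidef (hK.mul_mul_conjTranspose_same Hr)).det_pos
  have hrposre : (0 : ℝ) < ((1 : Matrix (Fin nr) (Fin nr) ℂ) + Hr * K * Hrᴴ).det.re :=
    (Complex.lt_def.mp hrpos).1
  have := Real.log_le_log hrposre hlere
  linarith
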